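/- For every k ≥ 2, the digraph D⃗_{2k+1} has no path partition orthogonal to the maximum stable set {x_0, x_{2k}}. -/

import Mathlib

/-- A directed path in a digraph with arc relation `A`: a nonempty list of distinct
vertices each of which dominates the next. -/
def IsDipath {V : Type*} (A : V → V → Prop) (p : List V) : Prop :=
  p ≠ [] ∧ p.Nodup ∧ p.Chain' A

/-- A path partition of the digraph `(V, A)`: a collection of vertex-disjoint directed
paths covering all of `V`. -/
def IsPathPartition {V : Type*} (A : V → V → Prop) (P : Set (List V)) : Prop :=
  (∀ p ∈ P, IsDipath A p) ∧
  (∀ p ∈ P, ∀ q ∈ P, p ≠ q → ∀ v : V, v ∈ p → v ∉ q) ∧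
  (∀ v : V, ∃ p ∈ P, v ∈ p)

/-- A path partition `P` and a stable set `S` are orthogonal if every path of `P`
contains exactly one vertex of `S`. -/
def OrthogonalPP {V : Type*} (P : Set (List V)) (S : Set V) : Prop :=
  ∀ p ∈ P, ∃! v : V, v ∈ S ∧ v ∈ p

/-- The arc relation of the digraph `D⃗_{2k+1}` on vertices `x_0, …, x_{2k}`
(realized as `ZMod (2*k+1)`): the arcs are exactly the pairs `(x_i, x_j)` with
`0 ≤ i < j ≤ 2k`, `j - i ≥ 2` and `(i, j) ≠ (0, 2k)`. -/
def DvecArc (k : ℕ) (u v : ZMod (2*k+1)) : Prop :=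
  u.val + 2 ≤ v.val ∧ ¬(u.val = 0 ∧ v.val = 2*k)

lemma chainA (k : ℕ) : ∀ (l : List (ZMod (2*k+1))) (h : l ≠ []),
    l.Chain' (DvecArc k) → (l.head h).val + 2*(l.length - 1) ≤ (l.getLast h).val := by
  intro l
  induction l with
  | nil => simp
  | cons a l' ih =>
    intro h hc
    cases l' with
    | nil => simp
    | cons b t =>
      have hc2 : DvecArc k a b ∧ (b::t).Chain' (DvecArc k) := by
        simp only [List.Chain', List.isChain_cons_cons] at hc; exact hc
      have hne : (b::t) ≠ [] := by simp
      have := ih hne hc2.2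
      have h1 : a.val + 2 ≤ b.val := hc2.1.1
      rw [List.getLast_cons hne]
      simp only [List.head_cons] at this ⊢
      simp only [List.length_cons] at this ⊢
      omega


/-- for `k ≥ 2`, `D⃗_{2k+1}` has no path partition orthogonal to the
maximum stable set `{x_0, x_{2k}}`. -/
theorem stmt_6 (k : ℕ) (hk : 2 ≤ k) :
    ¬ ∃ P : Set (List (ZMod (2*k+1))), IsPathPartition (DvecArc k) P ∧
      OrthogonalPP P {((0 : ℕ) : ZMod (2*k+1)), ((2*k : ℕ) : ZMod (2*k+1))} := by
  rintro ⟨P, ⟨hpaths, hdisj, hcover⟩, horth⟩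
  set S : Set (ZMod (2*k+1)) := {((0 : ℕ) : ZMod (2*k+1)), ((2*k : ℕ) : ZMod (2*k+1))}
    with hS
  haveI : NeZero (2*k+1) := ⟨by omega⟩
  have hval0 : ((0 : ℕ) : ZMod (2*k+1)).val = 0 := by simp
  have hval2k : ((2*k : ℕ) : ZMod (2*k+1)).val = 2*k := ZMod.val_cast_of_lt (by omega)
  -- the two special paths
  obtain ⟨p0, hp0P, hp0⟩ := hcover ((0 : ℕ) : ZMod (2*k+1))
  obtain ⟨p1, hp1P, hp1⟩ := hcover ((2*k : ℕ) : ZMod (2*k+1))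
  -- every vertex lies in p0 or p1
  have hcov2 : ∀ v : ZMod (2*k+1), v ∈ p0 ∨ v ∈ p1 := by
    intro v
    obtain ⟨p, hpP, hvp⟩ := hcover v
    obtain ⟨w, ⟨hwS, hwp⟩, _⟩ := horth p hpP
    have hw : w = ((0 : ℕ) : ZMod (2*k+1)) ∨ w = ((2*k : ℕ) : ZMod (2*k+1)) := hwS
    rcases hw with hw | hw
    · left
      by_cases hpp : p = p0
      · exact hpp ▸ hvp
      · exact absurd hp0 (hdisj p hpP p0 hp0P hpp _ (hw ▸ hwp))
    · right
      by_cases hpp : p = p1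
      · exact hpp ▸ hvp
      · exact absurd hp1 (hdisj p hpP p1 hp1P hpp _ (hw ▸ hwp))
  -- cardinality count
  have hsub : (Finset.univ : Finset (ZMod (2*k+1))) ⊆ p0.toFinset ∪ p1.toFinset := by
    intro v _
    rcases hcov2 v with h | h
    · exact Finset.mem_union_left _ (List.mem_toFinset.mpr h)
    · exact Finset.mem_union_right _ (List.mem_toFinset.mpr h)
  have hcard : 2*k+1 ≤ p0.length + p1.length := by
    have h1 := Finset.card_le_card hsub
    have h2 := Finset.card_union_le p0.toFinset p1.toFinset
    have h3 : p0.toFinset.card ≤ p0.length := p0.toFinset_card_le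
    have h4 : p1.toFinset.card ≤ p1.length := p1.toFinset_card_le
    have h5 : (Finset.univ : Finset (ZMod (2*k+1))).card = 2*k+1 := by
      simp [ZMod.card]
    omega
  -- so one of the paths has length ≥ k+1
  have hlong : ∃ p ∈ P, k+1 ≤ p.length := by
    rcases le_or_gt (k+1) p0.length with h | h
    · exact ⟨p0, hp0P, h⟩
    · exact ⟨p1, hp1P, by omega⟩
  obtain ⟨p, hpP, hlen⟩ := hlong
  obtain ⟨hne, hnd, hch⟩ := hpaths p hpP
  have hbound := chainA k p hne hch
  have hheadlt : (p.head hne).val < 2*k+1 := ZMod.val_lt _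
  have hlastlt : (p.getLast hne).val < 2*k+1 := ZMod.val_lt _
  have hhead0 : (p.head hne).val = 0 := by omega
  have hlast2k : (p.getLast hne).val = 2*k := by omega
  -- these two vertices of p are the two distinct elements of S
  have heq0 : p.head hne = ((0 : ℕ) : ZMod (2*k+1)) :=
    ZMod.val_injective (2*k+1) (by rw [hhead0, hval0])
  have heq2k : p.getLast hne = ((2*k : ℕ) : ZMod (2*k+1)) := by
    exact ZMod.val_injective (2*k+1) (by rw [hlast2k, hval2k])
  obtain ⟨w, _, huniq⟩ := horth p hpP
  have e1 : ((0 : ℕ) : ZMod (2*k+1)) = w :=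
    huniq _ ⟨Or.inl rfl, heq0 ▸ p.head_mem hne⟩
  have e2 : ((2*k : ℕ) : ZMod (2*k+1)) = w :=
    huniq _ ⟨Or.inr rfl, heq2k ▸ p.getLast_mem hne⟩
  have : ((0 : ℕ) : ZMod (2*k+1)).val = ((2*k : ℕ) : ZMod (2*k+1)).val := by
    rw [e1, e2]
  omega
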